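/- Let T ∈ B_{A^{1/2}}(H) satisfy TA^{1/2} = A^{1/2}T. Then r_A(T) = sup{|λ| : λ ∈ σ_A(T)}. -/

import Mathlib

set_option linter.unusedSectionVars false
set_option maxHeartbeats 1000000

open scoped ENNReal


variable {H : Type*} [NormedAddCommGroup H] [InnerProductSpace ℂ H] [CompleteSpace H]

/-- The semi-norm `‖x‖_A = ⟨Ax, x⟩^{1/2}` induced by a positive operator `A`. -/
noncomputable def anorm (A : H →L[ℂ] H) (x : H) : ℝ :=
  Real.sqrt (RCLike.re (inner ℂ (A x) x : ℂ))

/-- Membership in `B_{A^{1/2}}(H)`: there is `c > 0` with `‖Tx‖_A ≤ c ‖x‖_A` for all `x`. -/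
def MemBA (A T : H →L[ℂ] H) : Prop :=
  ∃ c > 0, ∀ x : H, anorm A (T x) ≤ c * anorm A x

/-- The `A`-operator seminorm `‖T‖_A`: the least `c ≥ 0` with `‖Tx‖_A ≤ c ‖x‖_A` for all `x`. -/
noncomputable def opANorm (A T : H →L[ℂ] H) : ℝ :=
  sInf {c : ℝ | 0 ≤ c ∧ ∀ x : H, anorm A (T x) ≤ c * anorm A x}

/-- `T` is `A`-invertible in `B_{A^{1/2}}(H)`. -/
def AInv (A T : H →L[ℂ] H) : Prop :=
  T ≠ 0 ∧ ∃ S : H →L[ℂ] H, S ≠ 0 ∧ MemBA A S ∧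
    A.comp (T.comp S) = A ∧ A.comp (S.comp T) = A

/-- The `A`-resolvent set `ρ_A(T)`. -/
def rhoA (A T : H →L[ℂ] H) : Set ℂ :=
  {lam : ℂ | AInv A (lam • (1 : H →L[ℂ] H) - T)}

/-- The `A`-spectrum `σ_A(T)`. -/
def sigmaA (A T : H →L[ℂ] H) : Set ℂ := (rhoA A T)ᶜ

/-- The `A`-spectral radius `r_A(T) = inf_{n ≥ 1} ‖T^n‖_A^{1/n}`. -/
noncomputable def rA (A T : H →L[ℂ] H) : ℝ :=
  ⨅ n : ℕ+, (opANorm A (T ^ (n : ℕ))) ^ ((((n : ℕ) : ℝ))⁻¹)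

/-- `sup {|λ| : λ ∈ σ_A(T)}`. -/
noncomputable def supSpecA (A T : H →L[ℂ] H) : ℝ :=
  sSup ((fun z : ℂ => ‖z‖) '' sigmaA A T)

/-- `S` is the `A^{1/2}`-adjoint `T^⋄` of `T`. -/
def IsDiamond (sqrtA T S : H →L[ℂ] H) : Prop :=
  sqrtA.comp S = (ContinuousLinearMap.adjoint T).comp sqrtA ∧
    Set.range (⇑S) ⊆ closure (Set.range (⇑sqrtA))

/-- The orthogonal projection of `H` onto the closure of the range of `A`. -/
noncomputable def projA (A : H →L[ℂ] H) : H →L[ℂ] H :=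
  haveI : CompleteSpace ((LinearMap.range (A : H →ₗ[ℂ] H)).topologicalClosure : Submodule ℂ H) :=
    (Submodule.isClosed_topologicalClosure _).completeSpace_coe
  ((LinearMap.range (A : H →ₗ[ℂ] H)).topologicalClosure.subtypeL).comp
    ((LinearMap.range (A : H →ₗ[ℂ] H)).topologicalClosure.orthogonalProjectionOnto)

-- auxiliary

section basic
variable {A sqrtA : H →L[ℂ] H} (hsa : IsSelfAdjoint sqrtA) (hsq : sqrtA.comp sqrtA = A)

include hsq in
lemma sq_apply (x : H) : sqrtA (sqrtA x) = A x := by rw [← hsq]; rfl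

include hsa hsq in
lemma anorm_eq (x : H) : anorm A x = ‖sqrtA x‖ := by
  have h1 : (inner ℂ (A x) x : ℂ) = inner ℂ (sqrtA x) (sqrtA x) := by
    rw [← sq_apply hsq x]; exact hsa.isSymmetric (sqrtA x) x
  rw [anorm, h1]; simp [inner_self_eq_norm_sq]; rw [← Complex.ofReal_pow, Complex.ofReal_re, Real.sqrt_sq (norm_nonneg _)]

include hsa hsq in
lemma sqrtA_eq_zero_of {x : H} (hx : A x = 0) : sqrtA x = 0 := by
  have := anorm_eq hsa hsq x
  rw [anorm, hx] at this
  simpa using this.symm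

end basic

noncomputable def Mcl (sqrtA : H →L[ℂ] H) : Submodule ℂ H :=
  (LinearMap.range (sqrtA : H →ₗ[ℂ] H)).topologicalClosure

instance (sqrtA : H →L[ℂ] H) : CompleteSpace (Mcl sqrtA) :=
  Submodule.topologicalClosure.completeSpace _

lemma sqrtA_mem_Mcl (sqrtA : H →L[ℂ] H) (x : H) : sqrtA x ∈ Mcl sqrtA :=
  Submodule.le_topologicalClosure _ (LinearMap.mem_range_self (sqrtA : H →ₗ[ℂ] H) x)

lemma mem_Mcl_iff {sqrtA : H →L[ℂ] H} {x : H} :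
    x ∈ Mcl sqrtA ↔ x ∈ closure (Set.range sqrtA) := by
  have : x ∈ Mcl sqrtA ↔ x ∈ closure ((LinearMap.range (sqrtA : H →ₗ[ℂ] H) : Submodule ℂ H) : Set H) :=
    Iff.rfl
  rw [this, LinearMap.coe_range, ContinuousLinearMap.coe_coe]

lemma Mcl_invariant {sqrtA U : H →L[ℂ] H} (hcomm : ∀ x, U (sqrtA x) = sqrtA (U x))
    {x : H} (hx : x ∈ Mcl sqrtA) : U x ∈ Mcl sqrtA := by
  rw [mem_Mcl_iff] at hx ⊢
  refine map_mem_closure U.continuous hx ?_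
  rintro _ ⟨y, rfl⟩
  exact ⟨U y, (hcomm y).symm⟩

noncomputable def restr (sqrtA U : H →L[ℂ] H) (h : ∀ x ∈ Mcl sqrtA, U x ∈ Mcl sqrtA) :
    Mcl sqrtA →L[ℂ] Mcl sqrtA where
  toFun m := ⟨U m, h m m.2⟩
  map_add' m n := by ext; simp
  map_smul' c m := by ext; simp
  cont := Continuous.subtype_mk (U.continuous.comp continuous_subtype_val) _

@[simp] lemma restr_coe {sqrtA U : H →L[ℂ] H} (h : ∀ x ∈ Mcl sqrtA, U x ∈ Mcl sqrtA)
    (m : Mcl sqrtA) : (restr sqrtA U h m : H) = U m := rfl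

noncomputable def toM (sqrtA : H →L[ℂ] H) (x : H) : Mcl sqrtA :=
  ⟨sqrtA x, sqrtA_mem_Mcl sqrtA x⟩

@[simp] lemma toM_coe (sqrtA : H →L[ℂ] H) (x : H) : (toM sqrtA x : H) = sqrtA x := rfl

lemma denseRange_toM (sqrtA : H →L[ℂ] H) : DenseRange (toM sqrtA) := by
  intro m
  have hm : (m : H) ∈ closure (Set.range sqrtA) := mem_Mcl_iff.mp m.2
  rw [closure_subtype]
  convert hm using 2
  ext y
  constructor
  · rintro ⟨_, ⟨x, rfl⟩, rfl⟩; exact ⟨x, rfl⟩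
  · rintro ⟨x, rfl⟩; exact ⟨toM sqrtA x, ⟨x, rfl⟩, rfl⟩

lemma restr_toM {sqrtA U : H →L[ℂ] H} (hcomm : ∀ x, U (sqrtA x) = sqrtA (U x))
    (h : ∀ x ∈ Mcl sqrtA, U x ∈ Mcl sqrtA) (x : H) :
    restr sqrtA U h (toM sqrtA x) = toM sqrtA (U x) := by
  ext; simp [hcomm x]

lemma restr_pow {sqrtA T : H →L[ℂ] H} (h : ∀ x ∈ Mcl sqrtA, T x ∈ Mcl sqrtA) (n : ℕ)
    (m : Mcl sqrtA) : ((((restr sqrtA T h) ^ n) m : Mcl sqrtA) : H) = (T ^ n) (m : H) := by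
  induction n generalizing m with
  | zero => simp
  | succ n ih =>
      rw [pow_succ, pow_succ]
      simp only [ContinuousLinearMap.mul_apply, ih]
      simp

lemma nontrivial_Mcl {sqrtA : H →L[ℂ] H} (h0 : sqrtA ≠ 0) : Nontrivial (Mcl sqrtA) := by
  obtain ⟨x, hx⟩ : ∃ x, sqrtA x ≠ 0 := by
    by_contra hc
    push_neg at hc
    exact h0 (by ext y; simpa using hc y)
  exact ⟨toM sqrtA x, 0, fun h => hx (by simpa using congrArg (Subtype.val) h)⟩

section opnorm
variable {A sqrtA : H →L[ℂ] H} (hsa : IsSelfAdjoint sqrtA) (hsq : sqrtA.comp sqrtA = A)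

include hsa hsq in
lemma opANorm_eq {U : H →L[ℂ] H} (hcomm : ∀ x, U (sqrtA x) = sqrtA (U x))
    (h : ∀ x ∈ Mcl sqrtA, U x ∈ Mcl sqrtA) :
    opANorm A U = ‖restr sqrtA U h‖ := by
  set Ut := restr sqrtA U h with hUt
  have hset : {c : ℝ | 0 ≤ c ∧ ∀ x : H, anorm A (U x) ≤ c * anorm A x} = Set.Ici ‖Ut‖ := by
    ext c
    simp only [Set.mem_setOf_eq, Set.mem_Ici]
    constructor
    · rintro ⟨hc0, hc⟩
      refine ContinuousLinearMap.opNorm_le_bound _ hc0 ?_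
      intro m
      refine DenseRange.induction_on (denseRange_toM sqrtA) m ?_ ?_
      · exact isClosed_le (continuous_norm.comp Ut.continuous)
          (continuous_const.mul continuous_norm)
      · intro x
        have h1 : Ut (toM sqrtA x) = toM sqrtA (U x) := restr_toM hcomm h x
        have h2 : ‖toM sqrtA (U x)‖ = ‖sqrtA (U x)‖ := rfl
        have h3 : ‖toM sqrtA x‖ = ‖sqrtA x‖ := rfl
        rw [h1, h2, h3]
        have := hc x
        rwa [anorm_eq hsa hsq, anorm_eq hsa hsq] at this
    · intro hc
      refine ⟨(norm_nonneg Ut).trans hc, fun x => ?_⟩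
      rw [anorm_eq hsa hsq, anorm_eq hsa hsq]
      have h1 : ‖sqrtA (U x)‖ = ‖Ut (toM sqrtA x)‖ := by
        rw [restr_toM hcomm h x]; rfl
      rw [h1]
      calc ‖Ut (toM sqrtA x)‖ ≤ ‖Ut‖ * ‖toM sqrtA x‖ := Ut.le_opNorm _
        _ ≤ c * ‖sqrtA x‖ := by
            exact mul_le_mul_of_nonneg_right hc (norm_nonneg _) |>.trans_eq rfl
  rw [opANorm, hset, csInf_Ici]

end opnorm


section spec
variable {A sqrtA T : H →L[ℂ] H} (hsa : IsSelfAdjoint sqrtA) (hsq : sqrtA.comp sqrtA = A)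

include hsa in
lemma mem_orthogonal_Mcl_iff {v : H} : v ∈ (Mcl sqrtA)ᗮ ↔ sqrtA v = 0 := by
  constructor
  · intro hv
    have h1 : (inner ℂ (sqrtA v) (sqrtA v) : ℂ) = inner ℂ (sqrtA (sqrtA v)) v :=
      (hsa.isSymmetric (sqrtA v) v).symm
    have h2 : (inner ℂ (sqrtA (sqrtA v)) v : ℂ) = 0 :=
      (Submodule.mem_orthogonal _ v).mp hv _ (sqrtA_mem_Mcl sqrtA (sqrtA v))
    rw [h2] at h1
    exact inner_self_eq_zero.mp h1
  · intro hv
    rw [Submodule.mem_orthogonal]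
    intro u hu
    have hcl : u ∈ closure (Set.range sqrtA) := mem_Mcl_iff.mp hu
    have hsub : closure (Set.range sqrtA) ⊆ {u : H | (inner ℂ u v : ℂ) = 0} := by
      refine closure_minimal ?_ ?_
      · rintro _ ⟨y, rfl⟩
        have h : (inner ℂ (sqrtA y) v : ℂ) = inner ℂ y (sqrtA v) := hsa.isSymmetric y v
        rw [Set.mem_setOf_eq, h, hv, inner_zero_right]
      · exact isClosed_eq (Continuous.inner continuous_id continuous_const) continuous_const
    exact hsub hcl

include hsa hsq in
lemma sqrtA_proj (x : H) :
    sqrtA (((Mcl sqrtA).orthogonalProjectionOnto x : Mcl sqrtA) : H) = sqrtA x := by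
  have h1 : x - ((Mcl sqrtA).orthogonalProjectionOnto x : H) ∈ (Mcl sqrtA)ᗮ :=
    Submodule.sub_starProjection_mem_orthogonal (K := Mcl sqrtA) x
  have h2 : sqrtA (x - ((Mcl sqrtA).orthogonalProjectionOnto x : H)) = 0 :=
    (mem_orthogonal_Mcl_iff hsa).mp h1
  rw [map_sub, sub_eq_zero] at h2
  exact h2.symm

variable (hcommT : ∀ x, T (sqrtA x) = sqrtA (T x))

include hcommT in
lemma hinvT : ∀ x ∈ Mcl sqrtA, T x ∈ Mcl sqrtA := fun _ hx => Mcl_invariant hcommT hx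

include hcommT in
lemma hcommD (lam : ℂ) : ∀ x : H,
    (lam • (1 : H →L[ℂ] H) - T) (sqrtA x) = sqrtA ((lam • (1 : H →L[ℂ] H) - T) x) := by
  intro x
  simp [hcommT x, map_sub, map_smul]

include hsa hsq hcommT in
lemma rhoA_iff (h0 : sqrtA ≠ 0) (lam : ℂ) :
    AInv A (lam • (1 : H →L[ℂ] H) - T) ↔
      IsUnit (lam • (1 : Mcl sqrtA →L[ℂ] Mcl sqrtA) - restr sqrtA T (hinvT hcommT)) := by
  set M := Mcl sqrtA
  set Tt := restr sqrtA T (hinvT hcommT) with hTt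
  set D := lam • (1 : H →L[ℂ] H) - T with hD
  set Dt := lam • (1 : M →L[ℂ] M) - Tt with hDt
  have hDapp : ∀ x : H, D x = lam • x - T x := fun x => rfl
  have hDtapp : ∀ m : M, Dt m = lam • m - Tt m := fun m => rfl
  have hDtcoe : ∀ m : M, ((Dt m : M) : H) = D (m : H) := by
    intro m; rw [hDtapp, hDapp]; rfl
  have hDtoM : ∀ x : H, Dt (toM sqrtA x) = toM sqrtA (D x) := by
    intro x
    ext
    rw [hDtcoe, toM_coe, toM_coe, hcommD hcommT lam x]
  constructor
  · rintro ⟨hD0, S, hS0, ⟨c, hc0, hc⟩, h1, h2⟩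
    -- pointwise consequences
    have e1 : ∀ x : H, sqrtA (D (S x)) = sqrtA x := by
      intro x
      have : A (D (S x)) = A x := congrFun (congrArg (fun f : H →L[ℂ] H => (f : H → H)) h1) x
      have h0 : A (D (S x) - x) = 0 := by rw [map_sub, this, sub_self]
      have := sqrtA_eq_zero_of hsa hsq h0
      rwa [map_sub, sub_eq_zero] at this
    have e2 : ∀ x : H, sqrtA (S (D x)) = sqrtA x := by
      intro x
      have : A (S (D x)) = A x := congrFun (congrArg (fun f : H →L[ℂ] H => (f : H → H)) h2) x
      have h0 : A (S (D x) - x) = 0 := by rw [map_sub, this, sub_self]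
      have := sqrtA_eq_zero_of hsa hsq h0
      rwa [map_sub, sub_eq_zero] at this
    have hcS : ∀ x : H, ‖sqrtA (S x)‖ ≤ c * ‖sqrtA x‖ := by
      intro x
      have := hc x
      rwa [anorm_eq hsa hsq, anorm_eq hsa hsq] at this
    -- lower bound on dense range
    have hlow : ∀ m : M, ‖m‖ ≤ c * ‖Dt m‖ := by
      have key : ∀ x : H, ‖toM sqrtA x‖ ≤ c * ‖Dt (toM sqrtA x)‖ := by
        intro x
        have hn1 : ‖toM sqrtA x‖ = ‖sqrtA x‖ := rfl
        have hn2 : ‖Dt (toM sqrtA x)‖ = ‖sqrtA (D x)‖ := by rw [hDtoM]; rfl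
        rw [hn1, hn2, ← e2 x]
        exact hcS (D x)
      intro m
      refine DenseRange.induction_on (denseRange_toM sqrtA) m ?_ key
      exact isClosed_le continuous_norm
        (continuous_const.mul (continuous_norm.comp Dt.continuous))
    have hanti : AntilipschitzWith c.toNNReal Dt := by
      refine Dt.antilipschitz_of_bound ?_
      intro m
      refine (hlow m).trans ?_
      gcongr
      exact (Real.coe_toNNReal c hc0.le).ge
    have hinj : Function.Injective Dt := hanti.injective
    have hclosed : IsClosed (Set.range Dt) := hanti.isClosed_range Dt.uniformContinuous
    have hsurj : Function.Surjective Dt := by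
      intro m
      have hsubset : Set.range (toM sqrtA) ⊆ Set.range Dt := by
        rintro _ ⟨x, rfl⟩
        refine ⟨toM sqrtA (S x), ?_⟩
        rw [hDtoM]
        ext
        rw [toM_coe, toM_coe]
        exact e1 x
      have : closure (Set.range (toM sqrtA)) ⊆ Set.range Dt := by
        rw [← hclosed.closure_eq]
        exact closure_mono hsubset
      exact this ((denseRange_toM sqrtA).closure_range ▸ Set.mem_univ m)
    exact ContinuousLinearMap.isUnit_iff_bijective.mpr ⟨hinj, hsurj⟩
  · intro hU
    obtain ⟨u, hu⟩ := hU
    haveI : Nontrivial M := nontrivial_Mcl h0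
    obtain ⟨m0, hm0⟩ := exists_ne (0 : M)
    haveI : Nontrivial (M →L[ℂ] M) := by
      refine ⟨1, 0, fun h => hm0 ?_⟩
      have := congrFun (congrArg (fun f : M →L[ℂ] M => (f : M → M)) h) m0
      simpa using this
    set P : H →L[ℂ] M := M.orthogonalProjectionOnto with hP
    set R : M →L[ℂ] M := ↑u⁻¹ with hR
    set st := restr sqrtA sqrtA (fun x hx => Mcl_invariant (fun _ => rfl) hx) with hst
    have hDtst : Commute Dt st := by
      have hTtst : Commute Tt st := by
        ext m
        show (T (sqrtA (m : H)) : H) = sqrtA (T (m : H))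
        exact hcommT (m : H)
      have h1c : Commute (lam • (1 : M →L[ℂ] M)) st := by
        rw [← Algebra.algebraMap_eq_smul_one]
        exact Algebra.commutes lam st
      exact h1c.sub_left hTtst
    have hRst : Commute R st := (hu ▸ hDtst).units_inv_left
    set S : H →L[ℂ] H := M.subtypeL.comp (R.comp P) with hS
    have hSapp : ∀ x : H, S x = ((R (P x) : M) : H) := fun x => rfl
    have hPmem : ∀ m : M, P ((m : M) : H) = m := fun m =>
      Submodule.orthogonalProjectionOnto_mem_subspace_eq_self m
    have hsqP : ∀ x : H, sqrtA ((P x : M) : H) = sqrtA x := fun x => sqrtA_proj hsa hsq x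
    have hstP : ∀ x : H, st (P x) = toM sqrtA x := by
      intro x
      apply Subtype.ext
      rw [restr_coe, hsqP x]
      rfl
    have hstcoe : ∀ m : M, ((st m : M) : H) = sqrtA (m : H) := fun m => rfl
    have hsqS : ∀ x : H, sqrtA (S x) = ((R (toM sqrtA x) : M) : H) := by
      intro x
      rw [hSapp]
      rw [← hstcoe (R (P x))]
      have : st (R (P x)) = R (st (P x)) := by
        have := hRst.eq
        calc st (R (P x)) = (st * R) (P x) := rfl
          _ = (R * st) (P x) := by rw [hRst.eq.symm]
          _ = R (st (P x)) := rfl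
      rw [this, hstP x]
    have hRDt : R.comp (u : M →L[ℂ] M) = 1 := by
      rw [hR, ← ContinuousLinearMap.mul_def, Units.inv_mul]
    have hDtR : (u : M →L[ℂ] M).comp R = 1 := by
      rw [hR, ← ContinuousLinearMap.mul_def, Units.mul_inv]
    have hApt : ∀ y : H, A y = sqrtA (sqrtA y) := fun y => (sq_apply hsq y).symm
    -- main composition identities
    have hDS : ∀ x : H, D (S x) = ((P x : M) : H) := by
      intro x
      rw [hSapp, ← hDtcoe (R (P x))]
      have : Dt (R (P x)) = P x := by
        have := congrFun (congrArg (fun f : M →L[ℂ] M => (f : M → M)) (hu ▸ hDtR)) (P x)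
        simpa using this
      rw [this]
    have hPD : ∀ x : H, P (D x) = Dt (P x) := by
      intro x
      have hxdec : D x = D ((P x : M) : H) + D (x - ((P x : M) : H)) := by
        rw [← map_add]
        congr 1
        abel
      have hw : sqrtA (x - ((P x : M) : H)) = 0 := by
        rw [map_sub, hsqP x, sub_self]
      have hTw : sqrtA (T (x - ((P x : M) : H))) = 0 := by
        rw [← hcommT (x - ((P x : M) : H)), hw, map_zero]
      have hDw : sqrtA (D (x - ((P x : M) : H))) = 0 := by
        simp only [hDapp, map_sub, map_smul, hw, hTw, smul_zero, sub_zero]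
        rw [← hcommT x, ← hcommT ((P x : M) : H), hsqP x]
        simp
      have hDworth : D (x - ((P x : M) : H)) ∈ Mᗮ := (mem_orthogonal_Mcl_iff hsa).mpr hDw
      rw [hxdec, map_add]
      have h1' : P (D ((P x : M) : H)) = Dt (P x) := by
        rw [← hDtcoe (P x), hPmem]
      have h2' : P (D (x - ((P x : M) : H))) = 0 :=
        Submodule.orthogonalProjectionOnto_apply_of_mem_orthogonal hDworth
      rw [h1', h2', add_zero]
    have hSD : ∀ x : H, S (D x) = ((P x : M) : H) := by
      intro x
      rw [hSapp, hPD x]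
      congr 1
      have := congrFun (congrArg (fun f : M →L[ℂ] M => (f : M → M)) (hu ▸ hRDt)) (P x)
      simpa using this
    have hAP : ∀ x : H, A ((P x : M) : H) = A x := by
      intro x
      rw [hApt, hApt, hsqP x]
    refine ⟨?_, S, ?_, ?_, ?_, ?_⟩
    · -- D ≠ 0
      intro hD0
      have hDt0 : Dt = 0 := by
        ext m
        rw [hDtcoe, hD0]
        simp
      rw [hDt0] at hu
      exact not_isUnit_zero (hu ▸ u.isUnit)
    · -- S ≠ 0
      intro hS0
      apply hm0
      have h1' : S ((Dt m0 : M) : H) = ((m0 : M) : H) := by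
        rw [hSapp, hPmem]
        congr 1
        have := congrFun (congrArg (fun f : M →L[ℂ] M => (f : M → M)) (hu ▸ hRDt)) m0
        simpa using this
      rw [hS0] at h1'
      have : ((m0 : M) : H) = 0 := by simpa using h1'.symm
      exact Subtype.ext (by simpa using this)
    · -- MemBA
      refine ⟨‖R‖ + 1, by positivity, fun x => ?_⟩
      rw [anorm_eq hsa hsq, anorm_eq hsa hsq, hsqS x]
      have hb : ‖R (toM sqrtA x)‖ ≤ ‖R‖ * ‖toM sqrtA x‖ := R.le_opNorm _
      have hn : ‖toM sqrtA x‖ = ‖sqrtA x‖ := rfl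
      calc ‖((R (toM sqrtA x) : M) : H)‖ = ‖R (toM sqrtA x)‖ := rfl
        _ ≤ ‖R‖ * ‖sqrtA x‖ := by rw [← hn]; exact hb
        _ ≤ (‖R‖ + 1) * ‖sqrtA x‖ := by
            have := norm_nonneg (sqrtA x)
            nlinarith
    · -- A ∘ D ∘ S = A
      ext x
      show A (D (S x)) = A x
      rw [hDS x, hAP x]
    · -- A ∘ S ∘ D = A
      ext x
      show A (S (D x)) = A x
      rw [hSD x, hAP x]
end spec



lemma inf_eq_spectralRadius {B : Type*} [NormedRing B] [NormedAlgebra ℂ B] [CompleteSpace B]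
    [NormOneClass B] (a : B) :
    (⨅ n : ℕ+, ‖a ^ (n : ℕ)‖ ^ ((((n : ℕ) : ℝ))⁻¹)) = (spectralRadius ℂ a).toReal := by
  have hfin : spectralRadius ℂ a ≠ ⊤ :=
    ne_top_of_le_ne_top ENNReal.coe_ne_top (spectrum.spectralRadius_le_nnnorm (𝕜 := ℂ) a)
  have hbdd : BddBelow (Set.range fun n : ℕ+ => ‖a ^ (n : ℕ)‖ ^ ((((n : ℕ) : ℝ))⁻¹)) := by
    refine ⟨0, ?_⟩
    rintro _ ⟨n, rfl⟩
    exact Real.rpow_nonneg (norm_nonneg _) _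
  have hlow : ∀ n : ℕ+, (spectralRadius ℂ a).toReal ≤ ‖a ^ (n : ℕ)‖ ^ ((((n : ℕ) : ℝ))⁻¹) := by
    intro n
    have h1 := spectrum.spectralRadius_le_pow_nnnorm_pow_one_div ℂ a ((n : ℕ) - 1)
    have hn1 : ((n : ℕ) - 1) + 1 = (n : ℕ) := Nat.succ_pred_eq_of_pos n.2
    rw [hn1] at h1
    rw [nnnorm_one, ENNReal.coe_one, ENNReal.one_rpow, mul_one] at h1
    have h2 := ENNReal.toReal_mono ?_ h1
    · rw [← ENNReal.toReal_rpow, ENNReal.coe_toReal, coe_nnnorm, one_div] at h2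
      rw [show ((((n : ℕ) - 1 : ℕ) : ℝ) + 1) = (((n : ℕ)) : ℝ) by exact_mod_cast hn1] at h2
      exact h2
    · exact ENNReal.rpow_ne_top_of_nonneg (by positivity) ENNReal.coe_ne_top
  have hup : (⨅ n : ℕ+, ‖a ^ (n : ℕ)‖ ^ ((((n : ℕ) : ℝ))⁻¹)) ≤ (spectralRadius ℂ a).toReal := by
    have htend := spectrum.pow_nnnorm_pow_one_div_tendsto_nhds_spectralRadius a
    have htendR : Filter.Tendsto (fun n : ℕ => ‖a ^ n‖ ^ ((1 : ℝ) / n)) Filter.atTop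
        (nhds ((spectralRadius ℂ a).toReal)) := by
      have hcont := (ENNReal.tendsto_toReal hfin).comp htend
      convert hcont using 1
      funext n
      rw [Function.comp_apply, ← ENNReal.toReal_rpow, ENNReal.coe_toReal, coe_nnnorm]
    refine ge_of_tendsto htendR ?_
    filter_upwards [Filter.eventually_ge_atTop 1] with n hn
    have := ciInf_le hbdd (⟨n, hn⟩ : ℕ+)
    simpa [one_div] using this
  exact le_antisymm hup (le_ciInf hlow)

lemma sup_eq_spectralRadius {B : Type*} [NormedRing B] [NormedAlgebra ℂ B] [CompleteSpace B]
    [NormOneClass B] [Nontrivial B] (a : B) :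
    sSup ((fun z : ℂ => ‖z‖) '' spectrum ℂ a) = (spectralRadius ℂ a).toReal := by
  have hfin : spectralRadius ℂ a ≠ ⊤ :=
    ne_top_of_le_ne_top ENNReal.coe_ne_top (spectrum.spectralRadius_le_nnnorm (𝕜 := ℂ) a)
  obtain ⟨z, hz, hznorm⟩ := spectrum.exists_nnnorm_eq_spectralRadius a
  have hub : ∀ w ∈ (fun z : ℂ => ‖z‖) '' spectrum ℂ a, w ≤ (spectralRadius ℂ a).toReal := by
    rintro _ ⟨z', hz', rfl⟩
    have h1 : (‖z'‖₊ : ℝ≥0∞) ≤ spectralRadius ℂ a := by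
      rw [spectralRadius]
      exact le_iSup₂ (f := fun k (_ : k ∈ spectrum ℂ a) => (‖k‖₊ : ℝ≥0∞)) z' hz'
    have := ENNReal.toReal_mono hfin h1
    simpa using this
  refine le_antisymm (csSup_le ⟨‖z‖, ⟨z, hz, rfl⟩⟩ hub) ?_
  have hmem : (spectralRadius ℂ a).toReal ∈ (fun z : ℂ => ‖z‖) '' spectrum ℂ a := by
    refine ⟨z, hz, ?_⟩
    rw [← hznorm]
    simp
  exact le_csSup ⟨(spectralRadius ℂ a).toReal, hub⟩ hmem

theorem stmt7 (A sqrtA T : H →L[ℂ] H) (hA : A.IsPositive) (hA0 : A ≠ 0)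
    (hsqrt : sqrtA.IsPositive) (hsq : sqrtA.comp sqrtA = A)
    (hT : MemBA A T) (hcomm : T.comp sqrtA = sqrtA.comp T) :
    rA A T = supSpecA A T := by
  have hsa : IsSelfAdjoint sqrtA := hsqrt.isSelfAdjoint
  have hcommT : ∀ x, T (sqrtA x) = sqrtA (T x) := fun x =>
    congrFun (congrArg (fun f : H →L[ℂ] H => (f : H → H)) hcomm) x
  have h0 : sqrtA ≠ 0 := by
    intro h
    apply hA0
    rw [← hsq, h]
    ext x
    simp
  haveI : Nontrivial (Mcl sqrtA) := nontrivial_Mcl h0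
  haveI : Nontrivial (Mcl sqrtA →L[ℂ] Mcl sqrtA) := by
    obtain ⟨m0, hm0⟩ := exists_ne (0 : Mcl sqrtA)
    refine ⟨1, 0, fun h => hm0 ?_⟩
    have := congrFun (congrArg
      (fun f : Mcl sqrtA →L[ℂ] Mcl sqrtA => (f : Mcl sqrtA → Mcl sqrtA)) h) m0
    simpa using this
  set Tt := restr sqrtA T (hinvT hcommT) with hTt
  have hcommPow : ∀ n : ℕ, ∀ x, (T ^ n) (sqrtA x) = sqrtA ((T ^ n) x) := by
    intro n
    induction n with
    | zero => intro x; simp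
    | succ n ih =>
        intro x
        rw [pow_succ]
        simp only [ContinuousLinearMap.mul_apply, hcommT x, ih (T x)]
  have hop : ∀ n : ℕ+, opANorm A (T ^ (n : ℕ)) = ‖Tt ^ (n : ℕ)‖ := by
    intro n
    rw [opANorm_eq hsa hsq (hcommPow (n : ℕ))
      (fun x hx => Mcl_invariant (hcommPow (n : ℕ)) hx)]
    congr 1
    ext m
    rw [restr_coe, ← restr_pow (hinvT hcommT) (n : ℕ) m]
  have hsigma : sigmaA A T = spectrum ℂ Tt := by
    ext lam
    rw [sigmaA, Set.mem_compl_iff, rhoA, Set.mem_setOf_eq, spectrum.mem_iff,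
      Algebra.algebraMap_eq_smul_one]
    exact not_iff_not.mpr (rhoA_iff hsa hsq hcommT h0 lam)
  rw [rA, supSpecA, hsigma]
  rw [show (fun n : ℕ+ => opANorm A (T ^ (n : ℕ)) ^ ((((n : ℕ) : ℝ))⁻¹)) =
      (fun n : ℕ+ => ‖Tt ^ (n : ℕ)‖ ^ ((((n : ℕ) : ℝ))⁻¹)) from
    funext fun n => by rw [hop n]]
  rw [inf_eq_spectralRadius Tt, sup_eq_spectralRadius Tt]
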